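/- The reduced Burau representation ρ₃ : B₃ → GL(2, ℤ[q,q⁻¹]) is injective (faithful). -/

import Mathlib

open LaurentPolynomial

noncomputable section

/-- The Laurent polynomial ring ℤ[q,q⁻¹]. -/
abbrev R : Type := LaurentPolynomial ℤ

/-- The variable q. -/
abbrev q : R := T 1

/-- Maximal degree of a Laurent polynomial, with M(0) = ⊥ (-∞). -/
def Mdeg (f : R) : WithBot ℤ := f.coeff.support.max

/-- Braid relations on m generators. -/
def braidRels (m : ℕ) : Set (FreeGroup (Fin m)) :=
  {r | (∃ i j : Fin m, (i : ℕ) + 1 = (j : ℕ) ∧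
          r = FreeGroup.of i * FreeGroup.of j * FreeGroup.of i *
              (FreeGroup.of j * FreeGroup.of i * FreeGroup.of j)⁻¹) ∨
       (∃ i j : Fin m, (i : ℕ) + 1 < (j : ℕ) ∧
          r = FreeGroup.of i * FreeGroup.of j * (FreeGroup.of j * FreeGroup.of i)⁻¹)}

/-- The braid group on n strands, with n-1 Artin generators. -/
abbrev BraidGroup (n : ℕ) := PresentedGroup (braidRels (n - 1))

/-- The Artin generator σ_{i+1} (0-based index i). -/
def σ {n : ℕ} (i : Fin (n - 1)) : BraidGroup n := PresentedGroup.of i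

/-- Artin generator with a natural-number index (1 outside range), 0-based. -/
def σ' {n : ℕ} (k : ℕ) : BraidGroup n := if h : k < n - 1 then σ ⟨k, h⟩ else 1

/-- The band (Birman–Ko–Lee) generator a_{i,j}, with 0-based punctures i < j < n:
  a_{i,j} = (σ_{j-2}⋯σ_{i+1}σᵢ)⁻¹ σ_{j-1} (σ_{j-2}⋯σ_{i+1}σᵢ) (1-based reading). -/
def band {n : ℕ} (i j : ℕ) : BraidGroup n :=
  (((List.range (j - 1 - i)).map (fun t => σ' (i + t))).reverse.prod)⁻¹ * σ' (j - 1) *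
    ((List.range (j - 1 - i)).map (fun t => σ' (i + t))).reverse.prod

/-- The classical Garside element Δ = (σ₁⋯σ_{n-1})(σ₁⋯σ_{n-2})⋯(σ₁σ₂)σ₁. -/
def halfTwist (n : ℕ) : BraidGroup n :=
  ((List.range (n - 1)).map (fun k => ((List.range (n - 1 - k)).map (σ' (n := n))).prod)).prod

/-- The dual Garside element δ = σ_{n-1}⋯σ₂σ₁. -/
def dualDelta (n : ℕ) : BraidGroup n :=
  (((List.range (n - 1)).map (σ' (n := n))).reverse).prod

/-- The reduced Burau matrices of the Artin generators σ₁, σ₂ of B₃. -/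
def burauGen3 : Fin 2 → Matrix (Fin 2) (Fin 2) R :=
  ![!![-q, 0; 1, 1], !![1, q; 0, -q]]

-- PART 0: basic setup
namespace B3F

abbrev B3 := BraidGroup 3

def s0 : B3 := σ (0 : Fin 2)
def s1 : B3 := σ (1 : Fin 2)

lemma braid_mem : (FreeGroup.of 0 * FreeGroup.of 1 * FreeGroup.of 0 *
    (FreeGroup.of 1 * FreeGroup.of 0 * FreeGroup.of 1)⁻¹ : FreeGroup (Fin 2)) ∈ braidRels 2 :=
  Or.inl ⟨0, 1, by decide, rfl⟩

lemma braid : s0 * s1 * s0 = s1 * s0 * s1 := by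
  have h : PresentedGroup.mk (braidRels 2) (FreeGroup.of 0 * FreeGroup.of 1 * FreeGroup.of 0 *
      (FreeGroup.of 1 * FreeGroup.of 0 * FreeGroup.of 1)⁻¹) = 1 :=
    (QuotientGroup.eq_one_iff _).2 (Subgroup.subset_normalClosure braid_mem)
  rw [map_mul, map_mul, map_inv, map_mul, map_mul] at h
  have h0 : PresentedGroup.mk (braidRels 2) (FreeGroup.of 0) = s0 := rfl
  have h1 : PresentedGroup.mk (braidRels 2) (FreeGroup.of 1) = s1 := rfl
  rw [h0, h1] at h
  exact mul_inv_eq_one.mp h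

lemma braid' : s0 * (s1 * s0) = s1 * (s0 * s1) := by
  have := braid; simpa only [mul_assoc] using this

def gy : B3 := s0 * s1
def gx : B3 := s0 * s1 * s0
def gz : B3 := gy * gy
def c : B3 := gx * gx

lemma mul_yy : gy * gy = gz := rfl
lemma mul_xx : gx * gx = c := rfl

lemma hc : gy * gz = c := by
  show (s0*s1) * ((s0*s1)*(s0*s1)) = (s0*s1*s0) * (s0*s1*s0)
  simp only [mul_assoc]
  rw [← braid']

lemma mul_zy : gz * gy = c := by
  show (gy*gy)*gy = c
  rw [mul_assoc, mul_yy, hc]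

lemma mul_zz : gz * gz = c * gy := by
  have h1 : gz * gz = gz * gy * gy := by
    show gz * (gy * gy) = gz * gy * gy
    rw [mul_assoc]
  rw [h1, mul_zy]

-- letters
inductive Ltr | x | y | z
deriving DecidableEq

open Ltr

def isx : Ltr → Bool
  | x => true
  | y => false
  | z => false

def sw : Ltr → Ltr
  | x => x
  | y => z
  | z => y

def gl : Ltr → B3
  | x => gx
  | y => gy
  | z => gz

lemma isx_sw (l : Ltr) : isx (sw l) = isx l := by cases l <;> rfl

def Alt (w : List Ltr) : Prop := w.Chain' (fun a b => isx a ≠ isx b)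

def gprod (w : List Ltr) : B3 := (w.map gl).prod

@[simp] lemma gprod_nil : gprod [] = 1 := rfl
@[simp] lemma gprod_cons (l : Ltr) (w : List Ltr) : gprod (l :: w) = gl l * gprod w := by
  simp [gprod]

lemma alt_nil : Alt [] := List.isChain_nil
lemma alt_singleton (l : Ltr) : Alt [l] := List.isChain_singleton l
lemma alt_pair {a b : Ltr} (hab : isx a ≠ isx b) : Alt [a, b] :=
  List.isChain_cons_cons.mpr ⟨hab, List.isChain_singleton b⟩
lemma alt_tail {a : Ltr} {w : List Ltr} (h : Alt (a :: w)) : Alt w := h.tail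
lemma alt_cons_of {l a : Ltr} {w : List Ltr} (hne : isx l ≠ isx a) (h : Alt (a :: w)) :
    Alt (l :: a :: w) := List.isChain_cons_cons.mpr ⟨hne, h⟩
lemma alt_replace {a b : Ltr} {w : List Ltr} (hb : isx b = isx a) (h : Alt (a :: w)) :
    Alt (b :: w) := by
  rcases w with _ | ⟨r, rs⟩
  · exact alt_singleton b
  · have h' := List.isChain_cons_cons.mp h
    exact List.isChain_cons_cons.mpr ⟨by rw [hb]; exact h'.1, h'.2⟩

lemma c_comm_gl (l : Ltr) : Commute c (gl l) := by
  have hx : Commute c gx := by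
    show Commute (gx * gx) gx
    exact ((Commute.refl gx).mul_left (Commute.refl gx))
  have hy : Commute c gy := by
    have h3 : Commute (gy * (gy * gy)) gy :=
      Commute.mul_left (Commute.refl gy) (Commute.mul_left (Commute.refl gy) (Commute.refl gy))
    have he : gy * (gy * gy) = c := by rw [mul_yy, hc]
    rwa [he] at h3
  cases l
  · exact hx
  · exact hy
  · show Commute c (gy * gy); exact hy.mul_right hy

lemma c_comm_gprod (w : List Ltr) : Commute c (gprod w) := by
  induction w with
  | nil => simpa using Commute.one_right c
  
  | cons l rest ih => rw [gprod_cons]; exact (c_comm_gl l).mul_right ih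

lemma lmul_letter (l : Ltr) (w : List Ltr) (hw : Alt w) :
    ∃ (j : ℤ) (w' : List Ltr), Alt w' ∧ gl l * gprod w = c ^ j * gprod w' := by
  cases w with
  | nil => exact ⟨0, [l], alt_singleton l, by simp⟩
  | cons a rest =>
    by_cases hk : isx l = isx a
    · -- same kind: combine
      have hrest : Alt rest := alt_tail hw
      cases l <;> cases a <;> simp only [isx] at hk <;> try exact absurd hk (by decide)
      -- x x
      · refine ⟨1, rest, hrest, ?_⟩
        rw [gprod_cons, ← mul_assoc]
        show gx * gx * gprod rest = c ^ (1:ℤ) * gprod rest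
        rw [mul_xx, zpow_one]
      -- y y
      · refine ⟨0, Ltr.z :: rest, alt_replace (by rfl) hw, ?_⟩
        rw [gprod_cons, ← mul_assoc, gprod_cons]
        show gy * gy * gprod rest = c ^ (0:ℤ) * (gz * gprod rest)
        rw [mul_yy, zpow_zero, one_mul]
      -- y z
      · refine ⟨1, rest, hrest, ?_⟩
        rw [gprod_cons, ← mul_assoc]
        show gy * gz * gprod rest = c ^ (1:ℤ) * gprod rest
        rw [hc, zpow_one]
      -- z y
      · refine ⟨1, rest, hrest, ?_⟩
        rw [gprod_cons, ← mul_assoc]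
        show gz * gy * gprod rest = c ^ (1:ℤ) * gprod rest
        rw [mul_zy, zpow_one]
      -- z z
      · refine ⟨1, Ltr.y :: rest, alt_replace (by rfl) hw, ?_⟩
        rw [gprod_cons, ← mul_assoc, gprod_cons]
        show gz * gz * gprod rest = c ^ (1:ℤ) * (gy * gprod rest)
        rw [mul_zz, zpow_one, mul_assoc]
    · exact ⟨0, l :: a :: rest, alt_cons_of hk hw, by simp⟩

lemma gprod_mul (w w' : List Ltr) (hw : Alt w) (hw' : Alt w') :
    ∃ (j : ℤ) (w'' : List Ltr), Alt w'' ∧ gprod w * gprod w' = c ^ j * gprod w'' := by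
  induction w with
  | nil => exact ⟨0, w', hw', by simp⟩
  | cons l rest ih =>
    obtain ⟨j, w₁, hw₁, h₁⟩ := ih (alt_tail hw)
    obtain ⟨k, w₂, hw₂, h₂⟩ := lmul_letter l w₁ hw₁
    refine ⟨j + k, w₂, hw₂, ?_⟩
    rw [gprod_cons, mul_assoc, h₁, ((c_comm_gl l).zpow_left j).symm.left_comm,
      h₂, ← mul_assoc, ← zpow_add]

lemma gl_sw_mul (l : Ltr) : gl (sw l) * gl l = c := by
  cases l
  · exact mul_xx
  · exact mul_zy
  · exact hc

lemma gl_inv (l : Ltr) : (gl l)⁻¹ = c ^ (-1 : ℤ) * gl (sw l) := by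
  rw [← gl_sw_mul l, zpow_neg, zpow_one, mul_inv_rev]
  group

lemma gprod_inv (w : List Ltr) (hw : Alt w) :
    ∃ (j : ℤ) (w' : List Ltr), Alt w' ∧ (gprod w)⁻¹ = c ^ j * gprod w' := by
  induction w with
  | nil => exact ⟨0, [], alt_nil, by simp⟩
  | cons l rest ih =>
    obtain ⟨j, w₁, hw₁, h₁⟩ := ih (alt_tail hw)
    obtain ⟨k, w₂, hw₂, h₂⟩ := gprod_mul w₁ [sw l] hw₁ (alt_singleton _)
    refine ⟨j + -1 + k, w₂, hw₂, ?_⟩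
    have hsw : gl (sw l) = gprod [sw l] := by simp
    rw [gprod_cons, mul_inv_rev, h₁, gl_inv,
      ((c_comm_gprod w₁).zpow_left (-1:ℤ)).symm.mul_mul_mul_comm, ← zpow_add,
      hsw, h₂, ← mul_assoc, ← zpow_add]

lemma s0_eq : s0 = c ^ (-1 : ℤ) * gprod [Ltr.z, Ltr.x] := by
  have hyz : gy * gz = gz * gy :=
    (((Commute.refl gy).mul_right (Commute.refl gy)) : Commute gy (gy * gy)).eq
  have h : c * s0 = gz * gx := by
    rw [← hc, hyz, mul_assoc]
    rfl
  have h2 := congrArg (fun t => c ^ (-1:ℤ) * t) h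
  simp only [zpow_neg, zpow_one, inv_mul_cancel_left] at h2
  rw [h2]
  simp [gprod, gl, zpow_neg, zpow_one, mul_assoc]

lemma s1_eq : s1 = c ^ (-1 : ℤ) * gprod [Ltr.x, Ltr.z] := by
  have h : c * s1 = gx * gz := by
    have h1 : c * s1 = gx * (gx * s1) := mul_assoc gx gx s1
    rw [h1]
    exact congrArg (gx * ·) (mul_assoc (s0 * s1) s0 s1)
  have h2 := congrArg (fun t => c ^ (-1:ℤ) * t) h
  simp only [zpow_neg, zpow_one, inv_mul_cancel_left] at h2
  rw [h2]
  simp [gprod, gl, zpow_neg, zpow_one, mul_assoc]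

/-- Normal form: every element of B₃ is c^m times an alternating word. -/
lemma normal_form (g : B3) : ∃ (m : ℤ) (w : List Ltr), Alt w ∧ g = c ^ m * gprod w := by
  obtain ⟨zz, rfl⟩ := PresentedGroup.mk_surjective _ g
  induction zz using FreeGroup.induction_on with
  | C1 => exact ⟨0, [], alt_nil, by simp⟩
  | of i =>
    fin_cases i
    · exact ⟨-1, [Ltr.z, Ltr.x], alt_pair (by decide), s0_eq⟩
    · exact ⟨-1, [Ltr.x, Ltr.z], alt_pair (by decide), s1_eq⟩
  | inv_of i hi =>
    obtain ⟨m, w, hw, hgw⟩ := hi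
    obtain ⟨j, w', hw', h'⟩ := gprod_inv w hw
    refine ⟨j + -m, w', hw', ?_⟩
    rw [map_inv, hgw, mul_inv_rev, h', ← zpow_neg, mul_assoc,
      ((c_comm_gprod w').zpow_left (-m)).symm.eq, ← mul_assoc, ← zpow_add]
  | mul u v hu hv =>
    obtain ⟨m, w, hw, hgw⟩ := hu
    obtain ⟨k, w', hw', hgw'⟩ := hv
    obtain ⟨j, w'', hw'', h''⟩ := gprod_mul w w' hw hw'
    refine ⟨m + k + j, w'', hw'', ?_⟩
    rw [map_mul, hgw, hgw',
      ((c_comm_gprod w).zpow_left k).symm.mul_mul_mul_comm, ← zpow_add, h'',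
      ← mul_assoc, ← zpow_add]

end B3F

-- PART B : leading terms of Laurent polynomials
lemma coeff_T_mul (n : ℤ) (f : R) (m : ℤ) : (T n * f : R).coeff m = f.coeff (m - n) := by
  rw [show (T n : R) = AddMonoidAlgebra.single n 1 from rfl, AddMonoidAlgebra.coeff_single_mul_apply]
  simp [neg_add_eq_sub]

/-- `f` has leading term `a * q^d`. -/
def LTm (f : R) (d : ℤ) (a : ℤ) : Prop :=
  a ≠ 0 ∧ f.coeff d = a ∧ ∀ m : ℤ, d < m → f.coeff m = 0

lemma LTm_one : LTm 1 0 1 := by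
  refine ⟨one_ne_zero, ?_, ?_⟩
  · rw [← T_zero, T_apply]; simp
  · intro m hm
    rw [← T_zero, T_apply]
    simp [hm.ne]

lemma LTm_T_mul (n : ℤ) {f : R} {d a : ℤ} (h : LTm f d a) : LTm (T n * f) (n + d) a := by
  refine ⟨h.1, ?_, ?_⟩
  · rw [coeff_T_mul]; rw [show n + d - n = d by ring]; exact h.2.1
  · intro m hm
    rw [coeff_T_mul]
    exact h.2.2 _ (by omega)

lemma LTm_neg {f : R} {d a : ℤ} (h : LTm f d a) : LTm (-f) d (-a) := by
  refine ⟨neg_ne_zero.mpr h.1, ?_, ?_⟩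
  · rw [AddMonoidAlgebra.coeff_neg, Finsupp.neg_apply, h.2.1]
  · intro m hm; rw [AddMonoidAlgebra.coeff_neg, Finsupp.neg_apply, h.2.2 m hm, neg_zero]

lemma LTm_add_lt {f g : R} {d e a b : ℤ} (hf : LTm f d a) (hg : LTm g e b) (hde : d < e) :
    LTm (f + g) e b := by
  refine ⟨hg.1, ?_, ?_⟩
  · rw [AddMonoidAlgebra.coeff_add, Finsupp.add_apply, hf.2.2 e hde, hg.2.1, zero_add]
  · intro m hm; rw [AddMonoidAlgebra.coeff_add, Finsupp.add_apply, hf.2.2 m (by omega), hg.2.2 m hm, add_zero]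

lemma LTm_add_eq {f g : R} {d a b : ℤ} (hf : LTm f d a) (hg : LTm g d b) (hab : a + b ≠ 0) :
    LTm (f + g) d (a + b) := by
  refine ⟨hab, ?_, ?_⟩
  · rw [AddMonoidAlgebra.coeff_add, Finsupp.add_apply, hf.2.1, hg.2.1]
  · intro m hm; rw [AddMonoidAlgebra.coeff_add, Finsupp.add_apply, hf.2.2 m hm, hg.2.2 m hm, add_zero]

lemma LTm_congr {f : R} {d a d' a' : ℤ} (hd : d = d') (ha : a = a') (h : LTm f d a) :
    LTm f d' a' := hd ▸ ha ▸ h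

lemma LTm_ne {f g : R} {d e a b : ℤ} (hf : LTm f d a) (hg : LTm g e b) (hde : d < e) :
    f ≠ g := by
  intro hfg
  apply hg.1
  rw [← hg.2.1, ← hfg, hf.2.2 e hde]

lemma LTm_ne' {f g : R} {d a b : ℤ} (hf : LTm f d a) (hg : LTm g d b) (hab : a ≠ b) :
    f ≠ g := by
  intro hfg
  apply hab
  rw [← hf.2.1, ← hg.2.1, hfg]

lemma T_eq_one {a : ℤ} (h : (T a : R) = 1) : a = 0 := by
  by_contra hne
  have h2 : (T a : R).coeff a = (1 : R).coeff a := by rw [h]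
  rw [T_apply, ← T_zero, T_apply] at h2
  simp [hne] at h2
  omega

namespace B3F

open Matrix

-- Burau matrices of the letters
def matL : Ltr → Matrix (Fin 2) (Fin 2) R
  | .x => !![0, -T 2; -T 1, 0]
  | .y => !![-T 1, -T 2; 1, 0]
  | .z => !![0, T 3; -T 1, -T 2]

def mprod (w : List Ltr) : Matrix (Fin 2) (Fin 2) R := (w.map matL).prod

@[simp] lemma mprod_nil : mprod [] = 1 := rfl
@[simp] lemma mprod_cons (l : Ltr) (w : List Ltr) : mprod (l :: w) = matL l * mprod w := by
  simp [mprod]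

def stp : Ltr → R × R → R × R
  | .x, p => (T 2 * -p.2, T 1 * -p.1)
  | .y, p => (T 1 * -p.1 + T 2 * -p.2, p.1)
  | .z, p => (T 3 * p.2, T 1 * -p.1 + T 2 * -p.2)

def vecw (w : List Ltr) : R × R := w.foldr stp (1, 1)

@[simp] lemma vecw_nil : vecw [] = (1, 1) := rfl
@[simp] lemma vecw_cons (l : Ltr) (w : List Ltr) : vecw (l :: w) = stp l (vecw w) := rfl

lemma mulVec_matL (l : Ltr) (p : R × R) :
    matL l *ᵥ ![p.1, p.2] = ![(stp l p).1, (stp l p).2] := by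
  cases l <;> funext i <;> fin_cases i <;>
    simp [matL, stp, Matrix.mulVec, dotProduct, Fin.sum_univ_two] <;> ring

lemma vecw_eq (w : List Ltr) : mprod w *ᵥ ![1, 1] = ![(vecw w).1, (vecw w).2] := by
  induction w with
  | nil => simp
  | cons l rest ih =>
    rw [mprod_cons, ← Matrix.mulVec_mulVec, ih, mulVec_matL, vecw_cons]

/-- state after applying an x-type letter -/
def Ust (p : R × R) : Prop := ∃ df dg F G : ℤ, LTm p.1 df F ∧ LTm p.2 dg G ∧
  (df < dg ∨ (df = dg ∧ F ≠ G) ∨ (df = dg + 1 ∧ F = -1 ∧ G = -1))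

/-- state after applying a y-type letter -/
def Vst (p : R × R) : Prop := ∃ df dg F G : ℤ, LTm p.1 df F ∧ LTm p.2 dg G ∧
  dg < df ∧ (df = dg + 1 → F ≠ G)

lemma TX {p : R × R} (h : Vst p) : Ust (stp .x p) := by
  obtain ⟨df, dg, F, G, hf, hg, hlt, hb⟩ := h
  refine ⟨2 + dg, 1 + df, -G, -F, LTm_T_mul 2 (LTm_neg hg), LTm_T_mul 1 (LTm_neg hf), ?_⟩
  by_cases hq : df = dg + 1
  · exact Or.inr (Or.inl ⟨by omega, fun he => hb hq (by omega)⟩)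
  · exact Or.inl (by omega)

lemma TY {p : R × R} (h : Ust p) : Vst (stp .y p) := by
  obtain ⟨df, dg, F, G, hf, hg, hc⟩ := h
  rcases hc with hlt | ⟨heq, hne⟩ | ⟨heq, hF, hG⟩
  · exact ⟨2 + dg, df, -G, F,
      LTm_add_lt (LTm_T_mul 1 (LTm_neg hf)) (LTm_T_mul 2 (LTm_neg hg)) (by omega), hf,
      by omega, fun he => absurd he (by omega)⟩
  · exact ⟨2 + dg, df, -G, F,
      LTm_add_lt (LTm_T_mul 1 (LTm_neg hf)) (LTm_T_mul 2 (LTm_neg hg)) (by omega), hf,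
      by omega, fun he => absurd he (by omega)⟩
  · refine ⟨1 + df, df, -F + -G, F,
      LTm_add_eq (LTm_T_mul 1 (LTm_neg hf))
        (LTm_congr (by omega) rfl (LTm_T_mul 2 (LTm_neg hg))) (by omega), hf,
      by omega, fun _ => by omega⟩

lemma TZ {p : R × R} (h : Ust p) : Vst (stp .z p) := by
  obtain ⟨df, dg, F, G, hf, hg, hc⟩ := h
  have hG0 := hg.1
  rcases hc with hlt | ⟨heq, hne⟩ | ⟨heq, hF, hG⟩
  · exact ⟨3 + dg, 2 + dg, G, -G, LTm_T_mul 3 hg,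
      LTm_add_lt (LTm_T_mul 1 (LTm_neg hf)) (LTm_T_mul 2 (LTm_neg hg)) (by omega),
      by omega, fun _ => by omega⟩
  · exact ⟨3 + dg, 2 + dg, G, -G, LTm_T_mul 3 hg,
      LTm_add_lt (LTm_T_mul 1 (LTm_neg hf)) (LTm_T_mul 2 (LTm_neg hg)) (by omega),
      by omega, fun _ => by omega⟩
  · refine ⟨3 + dg, 1 + df, G, -F + -G, LTm_T_mul 3 hg,
      LTm_add_eq (LTm_T_mul 1 (LTm_neg hf))
        (LTm_congr (by omega) rfl (LTm_T_mul 2 (LTm_neg hg))) (by omega),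
      by omega, fun _ => by omega⟩

lemma base_x : Ust (stp .x (1, 1)) :=
  ⟨2 + 0, 1 + 0, -1, -1, LTm_T_mul 2 (LTm_neg LTm_one), LTm_T_mul 1 (LTm_neg LTm_one),
    Or.inr (Or.inr ⟨by omega, rfl, rfl⟩)⟩

lemma base_y : Vst (stp .y (1, 1)) :=
  ⟨2 + 0, 0, -1, 1,
    LTm_add_lt (LTm_T_mul 1 (LTm_neg LTm_one)) (LTm_T_mul 2 (LTm_neg LTm_one)) (by omega),
    LTm_one, by omega, fun he => absurd he (by omega)⟩

lemma base_z : Vst (stp .z (1, 1)) :=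
  ⟨3 + 0, 2 + 0, 1, -1, LTm_T_mul 3 LTm_one,
    LTm_add_lt (LTm_T_mul 1 (LTm_neg LTm_one)) (LTm_T_mul 2 (LTm_neg LTm_one)) (by omega),
    by omega, fun _ => by omega⟩

lemma state_main : ∀ (w : List Ltr) (l : Ltr), Alt (l :: w) →
    (isx l = true → Ust (vecw (l :: w))) ∧ (isx l = false → Vst (vecw (l :: w))) := by
  intro w
  induction w with
  | nil =>
    intro l _
    cases l
    · exact ⟨fun _ => base_x, fun he => by simp [isx] at he⟩
    · exact ⟨fun he => by simp [isx] at he, fun _ => base_y⟩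
    · exact ⟨fun he => by simp [isx] at he, fun _ => base_z⟩
  | cons a rest ih =>
    intro l hw
    have hrel : isx l ≠ isx a := (List.isChain_cons_cons.mp hw).1
    have htail : Alt (a :: rest) := (List.isChain_cons_cons.mp hw).2
    have iha := ih a htail
    rw [vecw_cons]
    cases l
    · have ha : isx a = false := by cases h' : isx a <;> simp_all [isx]
      exact ⟨fun _ => TX (iha.2 ha), fun he => by simp [isx] at he⟩
    · have ha : isx a = true := by cases h' : isx a <;> simp_all [isx]
      exact ⟨fun he => by simp [isx] at he, fun _ => TY (iha.1 ha)⟩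
    · have ha : isx a = true := by cases h' : isx a <;> simp_all [isx]
      exact ⟨fun he => by simp [isx] at he, fun _ => TZ (iha.1 ha)⟩

lemma Ust_ne {p : R × R} (h : Ust p) : p.1 ≠ p.2 := by
  obtain ⟨df, dg, F, G, hf, hg, hc⟩ := h
  rcases hc with hlt | ⟨heq, hne⟩ | ⟨heq, _, _⟩
  · exact LTm_ne hf hg hlt
  · subst heq; exact LTm_ne' hf hg hne
  · exact fun he => (LTm_ne hg hf (by omega)) he.symm

lemma Vst_ne {p : R × R} (h : Vst p) : p.1 ≠ p.2 := by
  obtain ⟨df, dg, F, G, hf, hg, hlt, _⟩ := h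
  exact fun he => (LTm_ne hg hf hlt) he.symm

lemma nonscalar {w : List Ltr} (hw : Alt w) (hne : w ≠ []) (z : R) :
    mprod w ≠ z • (1 : Matrix (Fin 2) (Fin 2) R) := by
  intro he
  match w, hne with
  | l :: rest, _ =>
    have h1 := vecw_eq (l :: rest)
    rw [he, Matrix.smul_mulVec, Matrix.one_mulVec] at h1
    have e0 := congrFun h1 0
    have e1 := congrFun h1 1
    simp only [Pi.smul_apply, Matrix.cons_val_zero, Matrix.cons_val_one, Matrix.head_cons,
      smul_eq_mul, mul_one] at e0 e1
    have hst := state_main rest l hw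
    have hner : (vecw (l :: rest)).1 ≠ (vecw (l :: rest)).2 := by
      cases hl : isx l
      · exact Vst_ne (hst.2 hl)
      · exact Ust_ne (hst.1 hl)
    exact hner (by rw [← e0, ← e1])

end B3F

-- PART C: the representation on normal forms
namespace B3F

open Matrix

lemma matM1M2 : (!![-T 1, 0; 1, 1] : Matrix (Fin 2) (Fin 2) R) * !![1, T 1; 0, -T 1] = matL .y := by
  apply Matrix.ext
  intro i j
  fin_cases i <;> fin_cases j <;> simp [matL, Matrix.mul_apply, Fin.sum_univ_two, ← T_add]

lemma matYs0 : matL .y * (!![-T 1, 0; 1, 1] : Matrix (Fin 2) (Fin 2) R) = matL .x := by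
  apply Matrix.ext
  intro i j
  fin_cases i <;> fin_cases j <;> simp [matL, Matrix.mul_apply, Fin.sum_univ_two, ← T_add]

lemma smul_one_fin_two (t : R) : t • (1 : Matrix (Fin 2) (Fin 2) R) = !![t, 0; 0, t] := by
  funext i j
  fin_cases i <;> fin_cases j <;> simp [Matrix.one_apply]

lemma matYY : matL .y * matL .y = matL .z := by
  show (!![-T 1, -T 2; 1, 0] : Matrix (Fin 2) (Fin 2) R) * !![-T 1, -T 2; 1, 0] =
    !![0, T 3; -T 1, -T 2]
  rw [Matrix.mul_fin_two]
  rw [show (-T 1:R) * -T 1 + -T 2 * 1 = 0 by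
        simp only [neg_mul_neg, mul_one, ← T_add]; norm_num,
      show (-T 1:R) * -T 2 + -T 2 * 0 = T 3 by
        simp only [neg_mul_neg, mul_zero, add_zero, ← T_add]; norm_num,
      show (1:R) * -T 1 + 0 * 1 = -T 1 by simp,
      show (1:R) * -T 2 + 0 * 0 = -T 2 by simp]

lemma matXX : matL .x * matL .x = (T 3 : R) • (1 : Matrix (Fin 2) (Fin 2) R) := by
  show (!![0, -T 2; -T 1, 0] : Matrix (Fin 2) (Fin 2) R) * !![0, -T 2; -T 1, 0] =
    (T 3 : R) • (1 : Matrix (Fin 2) (Fin 2) R)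
  rw [Matrix.mul_fin_two, smul_one_fin_two]
  rw [show (0:R) * 0 + -T 2 * -T 1 = T 3 by
        simp only [neg_mul_neg, zero_mul, zero_add, ← T_add]; norm_num,
      show (0:R) * -T 2 + -T 2 * 0 = 0 by simp,
      show (-T 1:R) * 0 + 0 * -T 1 = 0 by simp,
      show (-T 1:R) * -T 2 + 0 * 0 = T 3 by
        simp only [neg_mul_neg, mul_zero, add_zero, ← T_add]; norm_num]

lemma val_gl (ρ : BraidGroup 3 →* GL (Fin 2) R)
    (hρ : ∀ i : Fin 2, (ρ (σ i) : Matrix (Fin 2) (Fin 2) R) = burauGen3 i) :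
    ∀ l : Ltr, (ρ (gl l) : Matrix (Fin 2) (Fin 2) R) = matL l := by
  have h0 : (ρ s0 : Matrix (Fin 2) (Fin 2) R) = !![-T 1, 0; 1, 1] := by
    have h := hρ 0
    rw [show σ (0 : Fin 2) = s0 from rfl] at h
    rw [h]
    simp [burauGen3]
  have h1 : (ρ s1 : Matrix (Fin 2) (Fin 2) R) = !![1, T 1; 0, -T 1] := by
    have h := hρ 1
    rw [show σ (1 : Fin 2) = s1 from rfl] at h
    rw [h]
    simp [burauGen3]
  have hy : (ρ gy : Matrix (Fin 2) (Fin 2) R) = matL .y := by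
    rw [show gy = s0 * s1 from rfl, _root_.map_mul, Units.val_mul, h0, h1, matM1M2]
  have hx : (ρ gx : Matrix (Fin 2) (Fin 2) R) = matL .x := by
    rw [show gx = gy * s0 from rfl, _root_.map_mul, Units.val_mul, hy, h0, matYs0]
  have hz : (ρ gz : Matrix (Fin 2) (Fin 2) R) = matL .z := by
    rw [show gz = gy * gy from rfl, _root_.map_mul, Units.val_mul, hy, matYY]
  intro l
  cases l
  · exact hx
  · exact hy
  · exact hz

lemma val_c (ρ : BraidGroup 3 →* GL (Fin 2) R)
    (hρ : ∀ i : Fin 2, (ρ (σ i) : Matrix (Fin 2) (Fin 2) R) = burauGen3 i) :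
    (ρ c : Matrix (Fin 2) (Fin 2) R) = (T 3 : R) • 1 := by
  rw [show c = gx * gx from rfl, _root_.map_mul, Units.val_mul,
    show (ρ gx : Matrix (Fin 2) (Fin 2) R) = matL .x from val_gl ρ hρ .x, matXX]

lemma val_gprod (ρ : BraidGroup 3 →* GL (Fin 2) R)
    (hρ : ∀ i : Fin 2, (ρ (σ i) : Matrix (Fin 2) (Fin 2) R) = burauGen3 i) :
    ∀ w : List Ltr, (ρ (gprod w) : Matrix (Fin 2) (Fin 2) R) = mprod w := by
  intro w
  induction w with
  | nil => simp
  | cons l rest ih =>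
    rw [gprod_cons, _root_.map_mul, Units.val_mul, ih, val_gl ρ hρ l, mprod_cons]

end B3F

/-- The reduced Burau representation of the 3-strand braid group is faithful. -/
theorem burau3_faithful
    (ρ : BraidGroup 3 →* GL (Fin 2) R)
    (hρ : ∀ i : Fin 2, (ρ (σ i) : Matrix (Fin 2) (Fin 2) R) = burauGen3 i) :
    Function.Injective ρ := by
  rw [injective_iff_map_eq_one]
  intro g hg
  obtain ⟨m, w, hw, rfl⟩ := B3F.normal_form g
  rw [map_mul, map_zpow] at hg
  have hvg := B3F.val_gprod ρ hρ w
  have hvc := B3F.val_c ρ hρ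
  obtain ⟨n, hn | hn⟩ := Int.eq_nat_or_neg m
  · subst hn
    rw [zpow_natCast] at hg
    have hval := congrArg (fun u : GL (Fin 2) R => (u : Matrix (Fin 2) (Fin 2) R)) hg
    simp only [Units.val_mul, Units.val_pow_eq_pow_val, Units.val_one] at hval
    rw [hvc, hvg, smul_pow, one_pow, T_pow, smul_mul_assoc, one_mul] at hval
    by_cases hwe : w = []
    · subst hwe
      rw [B3F.mprod_nil] at hval
      have ht : (T ((n : ℤ) * 3) : R) = 1 := by
        have h00 := congrFun (congrFun hval 0) 0
        simpa using h00
      have hn0 : (n : ℤ) * 3 = 0 := T_eq_one ht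
      have hn1 : n = 0 := by omega
      subst hn1
      norm_num [B3F.gprod_nil]
    · exfalso
      have h2 : B3F.mprod w = (T (-((n : ℤ) * 3)) : R) • (1 : Matrix (Fin 2) (Fin 2) R) := by
        have h3 := congrArg (fun M : Matrix (Fin 2) (Fin 2) R =>
          (T (-((n : ℤ) * 3)) : R) • M) hval
        simp only [smul_smul, ← T_add] at h3
        rw [show (-((n : ℤ) * 3) + (n : ℤ) * 3 : ℤ) = 0 by ring, T_zero, one_smul] at h3
        exact h3
      exact B3F.nonscalar hw hwe _ h2
  · subst hn
    rw [zpow_neg, zpow_natCast, inv_mul_eq_one] at hg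
    have hval := congrArg (fun u : GL (Fin 2) R => (u : Matrix (Fin 2) (Fin 2) R)) hg
    simp only [Units.val_pow_eq_pow_val] at hval
    rw [hvc, hvg, smul_pow, one_pow, T_pow] at hval
    by_cases hwe : w = []
    · subst hwe
      rw [B3F.mprod_nil] at hval
      have ht : (T ((n : ℤ) * 3) : R) = 1 := by
        have h00 := congrFun (congrFun hval 0) 0
        simpa using h00
      have hn0 : (n : ℤ) * 3 = 0 := T_eq_one ht
      have hn1 : n = 0 := by omega
      subst hn1
      norm_num [B3F.gprod_nil]
    · exact absurd hval.symm (B3F.nonscalar hw hwe _)
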